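/- Let (𝔞, ⋆, d_t, l) be an Itô *-algebra, V a complex inner product space, and π a ℂ-linear multiplicative map from 𝔞 into the ℂ-linear endomorphisms of V satisfying ⟪π(a⋆)x, y⟫ = ⟪x, π(a)y⟫ for all a ∈ 𝔞 and x, y ∈ V. Then π(d_t) = 0. Consequently, since d_t ≠ 0 (because l(d_t) = 1), no such π is injective: an Itô *-algebra admits no faithful operator representation on a (positive definite) Euclidean space by operators for which ⋆ becomes the Hermitian adjoint. -/

import Mathlib

open ComplexOrder in
/-- An Itô *-algebra has no faithful Hermitian operator representation
on a (positive definite) complex inner product space: any ℂ-linear multiplicative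
⋆-representation `π` kills `d_t`, and since `d_t ≠ 0` no such `π` is injective. -/
theorem ito_no_euclidean_representation
    {A : Type} [AddCommGroup A] [Module ℂ A]
    (m : A →ₗ[ℂ] A →ₗ[ℂ] A) (st : A →ₗ⋆[ℂ] A) (dt : A) (l : A →ₗ[ℂ] ℂ)
    (hassoc : ∀ a b c : A, m (m a b) c = m a (m b c))
    (hstm : ∀ a b : A, st (m a b) = m (st b) (st a))
    (hstst : ∀ a : A, st (st a) = a)
    (hstdt : st dt = dt)
    (hmdt : ∀ a : A, m a dt = 0)
    (hdtm : ∀ a : A, m dt a = 0)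
    (hldt : l dt = 1)
    (hlst : ∀ a : A, l (st a) = starRingEnd ℂ (l a))
    (hlpos : ∀ a : A, 0 ≤ l (m (st a) a))
    {V : Type} [NormedAddCommGroup V] [InnerProductSpace ℂ V]
    (π : A →ₗ[ℂ] (V →ₗ[ℂ] V))
    (hπmult : ∀ a b : A, π (m a b) = (π a) ∘ₗ (π b))
    (hπadj : ∀ (a : A) (x y : V), (inner ℂ (π (st a) x) y : ℂ) = inner ℂ x (π a y)) :
    π dt = 0 ∧ ¬ Function.Injective π := by
  have hsq : (π dt) ∘ₗ (π dt) = 0 := by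
    rw [← hπmult, hdtm, map_zero]
  have hzero : π dt = 0 := by
    ext x
    have h : (inner ℂ (π dt x) (π dt x) : ℂ) = 0 := by
      have := hπadj dt x (π dt x)
      rw [hstdt] at this
      rw [this]
      have : π dt (π dt x) = 0 := by
        have := congrArg (fun f => f x) hsq
        simpa using this
      rw [this, inner_zero_right]
    simpa using inner_self_eq_zero.mp h
  refine ⟨hzero, fun hinj => ?_⟩
  have : dt = 0 := hinj (by rw [hzero, map_zero])
  rw [this, map_zero] at hldt
  exact one_ne_zero hldt.symm
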